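/- For every η ≥ 0, misinformation MIS is differentiable at η and MIS′(η) = s·(M − 1)·∫_ℝ |y|·(μ(y) − μ̄)/D(η,y)² · g(y) dy. -/

import Mathlib

open MeasureTheory

/-- Density of the normal distribution `N(0, σ²)`. -/
noncomputable def gauss (σ y : ℝ) : ℝ :=
  (Real.sqrt (2 * Real.pi * σ ^ 2))⁻¹ * Real.exp (-(y ^ 2) / (2 * σ ^ 2))

/-- Mean highlighting propensity `μ̄ = ∫ μ(y)·g(y) dy`. -/
noncomputable def mubar (σ : ℝ) (μ : ℝ → ℝ) : ℝ :=
  ∫ y : ℝ, μ y * gauss σ y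

/-- Denominator `D(η,y) = M·(1 + η·μ̄) + η·(μ(y) − μ̄)`. -/
noncomputable def Dfun (σ : ℝ) (μ : ℝ → ℝ) (M η y : ℝ) : ℝ :=
  M * (1 + η * mubar σ μ) + η * (μ y - mubar σ μ)

/-- Expected popularity `π(η,y) = (1 + η·μ(y))/D(η,y)`. -/
noncomputable def popEx (σ : ℝ) (μ : ℝ → ℝ) (M η y : ℝ) : ℝ :=
  (1 + η * μ y) / Dfun σ μ M η y

/-- The affine clicking response
`Λ(z) = (M + log β·(M − ζ₀ + ζ₁·z))/(M + log β·M·(M − 1)/2)`. -/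
noncomputable def Lam (M β ζ₀ ζ₁ z : ℝ) : ℝ :=
  (M + Real.log β * (M - ζ₀ + ζ₁ * z)) / (M + Real.log β * M * (M - 1) / 2)

/-- The slope of `Λ`: `s = ζ₁·log β/(M + log β·M·(M − 1)/2)`. -/
noncomputable def slopeLam (M β ζ₁ : ℝ) : ℝ :=
  ζ₁ * Real.log β / (M + Real.log β * M * (M - 1) / 2)

/-- Misinformation `MIS(η) = ∫ |y|·Λ(π(η,y))·g(y) dy` (true state `θ = 0`). -/
noncomputable def MIS (σ : ℝ) (μ : ℝ → ℝ) (M β ζ₀ ζ₁ η : ℝ) : ℝ :=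
  ∫ y : ℝ, |y| * Lam M β ζ₀ ζ₁ (popEx σ μ M η y) * gauss σ y

lemma gauss_eq (σ : ℝ) (hσ : 0 < σ) (y : ℝ) :
    gauss σ y = (Real.sqrt (2 * Real.pi * σ ^ 2))⁻¹ * Real.exp (-((2*σ^2)⁻¹) * y ^ 2) := by
  unfold gauss
  congr 1
  congr 1
  field_simp
lemma gauss_nonneg (σ y : ℝ) : 0 ≤ gauss σ y := by
  unfold gauss
  positivity
lemma gauss_cont (σ : ℝ) : Continuous (gauss σ) := by
  unfold gauss; fun_prop
lemma integrable_gauss (σ : ℝ) (hσ : 0 < σ) : Integrable (gauss σ) := by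
  have hb : (0:ℝ) < (2*σ^2)⁻¹ := by positivity
  have := (integrable_exp_neg_mul_sq hb).const_mul (Real.sqrt (2 * Real.pi * σ ^ 2))⁻¹
  refine this.congr ?_
  filter_upwards with y
  rw [gauss_eq σ hσ]
lemma integral_gauss (σ : ℝ) (hσ : 0 < σ) : ∫ y : ℝ, gauss σ y = 1 := by
  have hb : (0:ℝ) < (2*σ^2)⁻¹ := by positivity
  have h1 : ∫ y : ℝ, gauss σ y
      = (Real.sqrt (2 * Real.pi * σ ^ 2))⁻¹ * ∫ y : ℝ, Real.exp (-((2*σ^2)⁻¹) * y ^ 2) := by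
    rw [← integral_const_mul]
    exact integral_congr_ae (Filter.Eventually.of_forall (gauss_eq σ hσ))
  rw [h1, integral_gaussian]
  have : Real.pi / (2*σ^2)⁻¹ = 2 * Real.pi * σ^2 := by field_simp
  rw [this, inv_mul_cancel₀]
  exact ne_of_gt (Real.sqrt_pos.2 (by positivity))
lemma integrable_abs_gauss (σ : ℝ) (hσ : 0 < σ) : Integrable (fun y => |y| * gauss σ y) := by
  have hb : (0:ℝ) < (2*σ^2)⁻¹ := by positivity
  have h := (integrable_mul_exp_neg_mul_sq hb).abs.const_mul
      (Real.sqrt (2 * Real.pi * σ ^ 2))⁻¹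
  refine h.congr ?_
  filter_upwards with y
  rw [gauss_eq σ hσ, abs_mul, abs_of_nonneg (Real.exp_nonneg _)]
  ring
section bounds
variable (σ : ℝ) (hσ : 0 < σ) (μ : ℝ → ℝ) (hμmeas : Measurable μ)
  (hμ : ∀ y, μ y ∈ Set.Icc (0:ℝ) 1)
include hσ hμmeas hμ in
lemma mubar_mem : mubar σ μ ∈ Set.Icc (0:ℝ) 1 := by
  have hint : Integrable (fun y => μ y * gauss σ y) := by
    refine (integrable_gauss σ hσ).mono' ?_ ?_
    · exact (hμmeas.mul (gauss_cont σ).measurable).aestronglyMeasurable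
    · filter_upwards with y
      rw [Real.norm_eq_abs, abs_mul, abs_of_nonneg (hμ y).1, abs_of_nonneg (gauss_nonneg σ y)]
      exact mul_le_of_le_one_left (gauss_nonneg σ y) (hμ y).2
  constructor
  · exact integral_nonneg fun y => mul_nonneg (hμ y).1 (gauss_nonneg σ y)
  · have h2 : mubar σ μ ≤ ∫ y : ℝ, gauss σ y :=
      integral_mono hint (integrable_gauss σ hσ) fun y =>
        mul_le_of_le_one_left (gauss_nonneg σ y) (hμ y).2
    rwa [integral_gauss σ hσ] at h2
include hσ hμmeas hμ in
lemma Dfun_ge {M : ℝ} (hM : 2 ≤ M) {t : ℝ} (ht : -(1/2 : ℝ) ≤ t) (y : ℝ) :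
    1 ≤ Dfun σ μ M t y := by
  obtain ⟨hm0, hm1⟩ := mubar_mem σ hσ μ hμmeas hμ
  obtain ⟨h0, h1⟩ := hμ y
  have key : Dfun σ μ M t y = M + t * ((M - 1) * mubar σ μ + μ y) := by
    unfold Dfun; ring
  rw [key]
  have hc0 : 0 ≤ (M - 1) * mubar σ μ + μ y := by nlinarith
  have hcM : (M - 1) * mubar σ μ + μ y ≤ M := by nlinarith
  rcases le_or_gt 0 t with h | h
  · nlinarith
  · nlinarith
end bounds
lemma hasDerivAt_pop (σ : ℝ) (μ : ℝ → ℝ) (M : ℝ) (y t : ℝ)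
    (hD : Dfun σ μ M t y ≠ 0) :
    HasDerivAt (fun t => popEx σ μ M t y)
      ((M - 1) * (μ y - mubar σ μ) / (Dfun σ μ M t y) ^ 2) t := by
  have hN : HasDerivAt (fun t : ℝ => 1 + t * μ y) (μ y) t := by
    simpa using ((hasDerivAt_id t).mul_const (μ y)).const_add 1
  have hDd : HasDerivAt (fun t => Dfun σ μ M t y)
      (M * mubar σ μ + (μ y - mubar σ μ)) t := by
    unfold Dfun
    have h1 : HasDerivAt (fun t : ℝ => M * (1 + t * mubar σ μ)) (M * mubar σ μ) t := by
      simpa using (((hasDerivAt_id t).mul_const (mubar σ μ)).const_add 1).const_mul M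
    have h2 : HasDerivAt (fun t : ℝ => t * (μ y - mubar σ μ)) (μ y - mubar σ μ) t := by
      simpa using (hasDerivAt_id t).mul_const (μ y - mubar σ μ)
    exact h1.add h2
  have h := hN.div hDd hD
  refine h.congr_deriv ?_
  unfold Dfun
  ring
lemma hasDerivAt_integrand (σ : ℝ) (μ : ℝ → ℝ) (M β ζ₀ ζ₁ : ℝ) (y t : ℝ)
    (hD : Dfun σ μ M t y ≠ 0) :
    HasDerivAt (fun t => |y| * Lam M β ζ₀ ζ₁ (popEx σ μ M t y) * gauss σ y)
      (|y| * (slopeLam M β ζ₁ * ((M - 1) * (μ y - mubar σ μ) / (Dfun σ μ M t y) ^ 2)) *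
        gauss σ y) t := by
  have hp := hasDerivAt_pop σ μ M y t hD
  have hL : HasDerivAt (fun t => Lam M β ζ₀ ζ₁ (popEx σ μ M t y))
      (slopeLam M β ζ₁ * ((M - 1) * (μ y - mubar σ μ) / (Dfun σ μ M t y) ^ 2)) t := by
    unfold Lam
    have h1 := ((((hp.const_mul ζ₁).const_add (M - ζ₀)).const_mul (Real.log β)).const_add
      M).div_const (M + Real.log β * M * (M - 1) / 2)
    refine h1.congr_deriv ?_
    unfold slopeLam
    ring
  exact (hL.const_mul |y|).mul_const (gauss σ y)
lemma meas_integrand (σ : ℝ) (μ : ℝ → ℝ) (hμmeas : Measurable μ) (M β ζ₀ ζ₁ t : ℝ) :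
    Measurable fun y => |y| * Lam M β ζ₀ ζ₁ (popEx σ μ M t y) * gauss σ y := by
  unfold Lam popEx Dfun gauss
  fun_prop
lemma meas_integrand' (σ : ℝ) (μ : ℝ → ℝ) (hμmeas : Measurable μ) (M β ζ₁ t : ℝ) :
    Measurable fun y => |y| * (slopeLam M β ζ₁ *
      ((M - 1) * (μ y - mubar σ μ) / (Dfun σ μ M t y) ^ 2)) * gauss σ y := by
  unfold Dfun gauss
  fun_prop
/-- For every `η ≥ 0`, `MIS` is differentiable at `η` with
`MIS′(η) = s·(M − 1)·∫ |y|·(μ(y) − μ̄)/D(η,y)² · g(y) dy`. -/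
theorem MIS_hasDerivAt (σ : ℝ) (hσ : 0 < σ)
    (μ : ℝ → ℝ) (hμmeas : Measurable μ) (hμ : ∀ y, μ y ∈ Set.Icc (0:ℝ) 1)
    (M : ℝ) (hM : 2 ≤ M) (β ζ₀ ζ₁ : ℝ) (hβ : 1 < β) (hζ₁ : 0 < ζ₁)
    (η : ℝ) (hη : 0 ≤ η) :
    HasDerivAt (fun t => MIS σ μ M β ζ₀ ζ₁ t)
      (slopeLam M β ζ₁ * (M - 1) *
        ∫ y : ℝ, |y| * (μ y - mubar σ μ) / (Dfun σ μ M η y) ^ 2 * gauss σ y)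
      η := by
  have hL : 0 < Real.log β := Real.log_pos hβ
  have hK : 0 < M + Real.log β * M * (M - 1) / 2 := by
    nlinarith [mul_pos hL (show (0:ℝ) < M * (M - 1) by nlinarith)]
  set L := Real.log β with hLdef
  set K := M + Real.log β * M * (M - 1) / 2 with hKdef
  set F : ℝ → ℝ → ℝ := fun t y => |y| * Lam M β ζ₀ ζ₁ (popEx σ μ M t y) * gauss σ y with hF
  set F' : ℝ → ℝ → ℝ := fun t y => |y| * (slopeLam M β ζ₁ *
      ((M - 1) * (μ y - mubar σ μ) / (Dfun σ μ M t y) ^ 2)) * gauss σ y with hF'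
  have hball : ∀ t ∈ Metric.ball η (1/2 : ℝ), -(1/2 : ℝ) ≤ t := by
    intro t ht
    rw [Metric.mem_ball, Real.dist_eq, abs_lt] at ht
    linarith [ht.1]
  have hDge : ∀ t ∈ Metric.ball η (1/2 : ℝ), ∀ y, 1 ≤ Dfun σ μ M t y := fun t ht y =>
    Dfun_ge σ hσ μ hμmeas hμ hM (hball t ht) y
  have hDη : ∀ y, 1 ≤ Dfun σ μ M η y := fun y =>
    Dfun_ge σ hσ μ hμmeas hμ hM (by linarith) y
  -- integrability of F η
  have hFint : Integrable (F η) := by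
    set C₀ : ℝ := (M + L * (|M - ζ₀| + ζ₁ * (1 + η))) / K with hC₀
    refine ((integrable_abs_gauss σ hσ).const_mul C₀).mono'
      ((meas_integrand σ μ hμmeas M β ζ₀ ζ₁ η).aestronglyMeasurable) ?_
    filter_upwards with y
    set z := popEx σ μ M η y with hz
    have hz0 : 0 ≤ z := div_nonneg (by nlinarith [(hμ y).1]) (by linarith [hDη y])
    have hz1 : z ≤ 1 + η := by
      rw [hz]
      unfold popEx
      rw [div_le_iff₀ (by linarith [hDη y])]
      nlinarith [hDη y, (hμ y).2,
        mul_le_mul_of_nonneg_left (hDη y) (show (0:ℝ) ≤ 1 + η by linarith)]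
    have hLam : |Lam M β ζ₀ ζ₁ z| ≤ C₀ := by
      unfold Lam
      rw [hC₀, abs_div, abs_of_pos hK]
      have hKK : (0:ℝ) < K := hK
      gcongr
      have a1 : |M + L * (M - ζ₀ + ζ₁ * z)| ≤ |M| + |L| * |M - ζ₀ + ζ₁ * z| := by
        calc |M + L * (M - ζ₀ + ζ₁ * z)| ≤ |M| + |L * (M - ζ₀ + ζ₁ * z)| := abs_add_le _ _
          _ = |M| + |L| * |M - ζ₀ + ζ₁ * z| := by rw [abs_mul]
      have a2 : |M - ζ₀ + ζ₁ * z| ≤ |M - ζ₀| + ζ₁ * (1 + η) := by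
        calc |M - ζ₀ + ζ₁ * z| ≤ |M - ζ₀| + |ζ₁ * z| := abs_add_le _ _
          _ ≤ |M - ζ₀| + ζ₁ * (1 + η) := by
              rw [abs_mul, abs_of_pos hζ₁, abs_of_nonneg hz0]
              nlinarith
      rw [abs_of_pos hL, abs_of_pos (show (0:ℝ) < M by linarith)] at a1
      nlinarith [mul_le_mul_of_nonneg_left a2 hL.le]
    rw [hF]
    simp only [Real.norm_eq_abs]
    rw [abs_mul, abs_mul, abs_abs, abs_of_nonneg (gauss_nonneg σ y)]
    calc |y| * |Lam M β ζ₀ ζ₁ z| * gauss σ y ≤ |y| * C₀ * gauss σ y := by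
          exact mul_le_mul_of_nonneg_right
            (mul_le_mul_of_nonneg_left hLam (abs_nonneg y)) (gauss_nonneg σ y)
      _ = C₀ * (|y| * gauss σ y) := by ring
  -- bound for the derivative
  set bound : ℝ → ℝ := fun y => (|slopeLam M β ζ₁| * (M - 1)) * (|y| * gauss σ y) with hbd
  have h_bound : ∀ᵐ y : ℝ, ∀ t ∈ Metric.ball η (1/2 : ℝ), ‖F' t y‖ ≤ bound y := by
    filter_upwards with y t ht
    have hD := hDge t ht y
    have habs : |μ y - mubar σ μ| ≤ 1 := by
      have h1 := mubar_mem σ hσ μ hμmeas hμ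
      rw [abs_sub_le_iff]
      constructor <;> [linarith [(hμ y).2, h1.1]; linarith [(hμ y).1, h1.2]]
    have h3 : |(M - 1) * (μ y - mubar σ μ) / (Dfun σ μ M t y) ^ 2| ≤ M - 1 := by
      rw [abs_div, abs_mul, abs_of_nonneg (show (0:ℝ) ≤ M - 1 by linarith),
        abs_of_nonneg (sq_nonneg (Dfun σ μ M t y))]
      rw [div_le_iff₀ (by nlinarith : (0:ℝ) < (Dfun σ μ M t y) ^ 2)]
      nlinarith [abs_nonneg (μ y - mubar σ μ), mul_self_nonneg (Dfun σ μ M t y - 1)]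
    have h4 : |slopeLam M β ζ₁ * ((M - 1) * (μ y - mubar σ μ) / (Dfun σ μ M t y) ^ 2)|
        ≤ |slopeLam M β ζ₁| * (M - 1) := by
      rw [abs_mul]
      exact mul_le_mul_of_nonneg_left h3 (abs_nonneg _)
    rw [hF', hbd]
    simp only [Real.norm_eq_abs]
    rw [abs_mul, abs_mul, abs_abs, abs_of_nonneg (gauss_nonneg σ y)]
    calc |y| * |slopeLam M β ζ₁ * ((M - 1) * (μ y - mubar σ μ) / (Dfun σ μ M t y) ^ 2)| *
          gauss σ y ≤ |y| * (|slopeLam M β ζ₁| * (M - 1)) * gauss σ y :=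
          mul_le_mul_of_nonneg_right
            (mul_le_mul_of_nonneg_left h4 (abs_nonneg y)) (gauss_nonneg σ y)
      _ = (|slopeLam M β ζ₁| * (M - 1)) * (|y| * gauss σ y) := by ring
  have h_diff : ∀ᵐ y : ℝ, ∀ t ∈ Metric.ball η (1/2 : ℝ),
      HasDerivAt (fun t => F t y) (F' t y) t := by
    filter_upwards with y t ht
    exact hasDerivAt_integrand σ μ M β ζ₀ ζ₁ y t (by linarith [hDge t ht y])
  have main := hasDerivAt_integral_of_dominated_loc_of_deriv_le
    (F := F) (F' := F') (bound := bound) (x₀ := η) (Metric.ball_mem_nhds η one_half_pos)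
    (Filter.Eventually.of_forall fun t =>
      (meas_integrand σ μ hμmeas M β ζ₀ ζ₁ t).aestronglyMeasurable)
    hFint
    ((meas_integrand' σ μ hμmeas M β ζ₁ η).aestronglyMeasurable)
    h_bound
    (((integrable_abs_gauss σ hσ).const_mul _))
    h_diff
  have hfinal := main.2
  have heq : (∫ y : ℝ, F' η y) = slopeLam M β ζ₁ * (M - 1) *
      ∫ y : ℝ, |y| * (μ y - mubar σ μ) / (Dfun σ μ M η y) ^ 2 * gauss σ y := by
    rw [← integral_const_mul]
    congr 1
    funext y
    rw [hF']
    ring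
  rw [heq] at hfinal
  exact hfinal
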